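/- Let b_{2k}(n) = max_t b_{2k}(n,t) be the maximum number of edges of the hypergraph B^(2k)(n,t) over valid t. Then b_{2k}(n) - b_{2k}(n-1) ≥ (1/2) * binom(n-1, 2k-1). -/

import Mathlib

/-- The number of edges of `B^(2k)` on vertex set `Fin n` determined by the part `A`:
the number of `2k`-subsets having odd intersection with both `A` and its complement. -/
def bpart (k n : ℕ) (A : Finset (Fin n)) : ℕ :=
  (Finset.univ.filter (fun X : Finset (Fin n) =>
    X.card = 2 * k ∧ Odd (X ∩ A).card ∧ Odd (X \ A).card)).card

/-- `b_{2k}(n)`: the maximum of `b_{2k}(n,t)` over all choices of the bipartition. -/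
def bmax (k n : ℕ) : ℕ :=
  Finset.univ.sup (fun A : Finset (Fin n) => bpart k n A)

open Finset

namespace Stmt10

variable {m : ℕ}

def e (m : ℕ) : Fin m ↪ Fin (m + 1) := ⟨Fin.castSucc, Fin.castSucc_injective m⟩

lemma last_not_mem_map (Y : Finset (Fin m)) : Fin.last m ∉ Y.map (e m) := by
  simp only [mem_map, not_exists]
  rintro y ⟨-, hy⟩
  exact absurd hy (Fin.castSucc_lt_last y).ne

lemma map_preimage_eq (X : Finset (Fin (m + 1))) (hX : Fin.last m ∉ X) :
    (X.preimage (e m) ((e m).injective.injOn)).map (e m) = X := by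
  ext x
  simp only [mem_map, mem_preimage]
  constructor
  · rintro ⟨y, hy, rfl⟩; exact hy
  · intro hx
    have hne : x ≠ Fin.last m := fun h => hX (h ▸ hx)
    obtain ⟨y, rfl⟩ := Fin.exists_castSucc_eq.mpr hne
    exact ⟨y, hx, rfl⟩

lemma card_inter_map (Y A : Finset (Fin m)) :
    (Y.map (e m) ∩ A.map (e m)).card = (Y ∩ A).card := by
  rw [← Finset.map_inter, card_map]

end Stmt10

namespace Stmt10

lemma count_nolast (k : ℕ) (A : Finset (Fin m)) :
    (univ.filter fun X : Finset (Fin (m + 1)) =>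
      (X.card = 2 * k ∧ Odd (X ∩ A.map (e m)).card ∧ Odd (X \ A.map (e m)).card)
        ∧ Fin.last m ∉ X).card
    = bpart k m A := by
  rw [bpart]
  apply card_nbij' (fun X => X.preimage (e m) ((e m).injective.injOn))
    (fun Y => Y.map (e m))
  · intro X hX
    simp only [mem_coe, mem_filter, mem_univ, true_and] at hX ⊢
    obtain ⟨⟨hcard, h1, h2⟩, hlast⟩ := hX
    have M := map_preimage_eq X hlast
    set P := X.preimage (e m) ((e m).injective.injOn) with hP
    have c1 : P.card = X.card := by rw [← M]; exact (card_map _).symm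
    have c2 : (P ∩ A).card = (X ∩ A.map (e m)).card := by
      rw [← M, ← Finset.map_inter, card_map]
    have c3 := card_sdiff_add_card_inter P A
    have c4 := card_sdiff_add_card_inter X (A.map (e m))
    simp only [Nat.odd_iff] at h1 h2 ⊢
    omega
  · intro Y hY
    simp only [mem_coe, mem_filter, mem_univ, true_and] at hY ⊢
    obtain ⟨hcard, h1, h2⟩ := hY
    have c1 : (Y.map (e m)).card = Y.card := card_map _
    have c2 := card_inter_map Y A
    have c3 := card_sdiff_add_card_inter Y A
    have c4 := card_sdiff_add_card_inter (Y.map (e m)) (A.map (e m))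
    have c5 := last_not_mem_map Y
    simp only [Nat.odd_iff] at h1 h2 ⊢
    refine ⟨⟨by omega, by omega, by omega⟩, c5⟩
  · intro X hX
    simp only [mem_coe, mem_filter] at hX
    exact map_preimage_eq X hX.2.2
  · intro Y _
    exact Finset.preimage_map (e m) Y

end Stmt10

namespace Stmt10

lemma inter_insert_last (X : Finset (Fin (m + 1))) (A : Finset (Fin m))
    (hl : Fin.last m ∉ X) :
    X ∩ insert (Fin.last m) (A.map (e m)) = X ∩ A.map (e m) := by
  ext x
  simp only [mem_inter, mem_insert]
  constructor
  · rintro ⟨hx, h | h⟩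
    · exact absurd (h ▸ hx) hl
    · exact ⟨hx, h⟩
  · rintro ⟨hx, h⟩; exact ⟨hx, Or.inr h⟩

lemma sdiff_insert_last (X : Finset (Fin (m + 1))) (A : Finset (Fin m))
    (hl : Fin.last m ∉ X) :
    X \ insert (Fin.last m) (A.map (e m)) = X \ A.map (e m) := by
  ext x
  simp only [mem_sdiff, mem_insert]
  constructor
  · rintro ⟨hx, h⟩; exact ⟨hx, fun hh => h (Or.inr hh)⟩
  · rintro ⟨hx, h⟩
    refine ⟨hx, ?_⟩
    rintro (rfl | hh)
    · exact hl hx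
    · exact h hh

lemma nolast_congr (k : ℕ) (A : Finset (Fin m)) :
    (univ.filter fun X : Finset (Fin (m + 1)) =>
      (X.card = 2 * k ∧ Odd (X ∩ insert (Fin.last m) (A.map (e m))).card
        ∧ Odd (X \ insert (Fin.last m) (A.map (e m))).card) ∧ Fin.last m ∉ X)
    = (univ.filter fun X : Finset (Fin (m + 1)) =>
      (X.card = 2 * k ∧ Odd (X ∩ A.map (e m)).card ∧ Odd (X \ A.map (e m)).card)
        ∧ Fin.last m ∉ X) := by
  apply filter_congr
  intro X _
  constructor
  · rintro ⟨⟨hc, h1, h2⟩, hl⟩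
    rw [inter_insert_last X A hl] at h1
    rw [sdiff_insert_last X A hl] at h2
    exact ⟨⟨hc, h1, h2⟩, hl⟩
  · rintro ⟨⟨hc, h1, h2⟩, hl⟩
    rw [← inter_insert_last X A hl] at h1
    rw [← sdiff_insert_last X A hl] at h2
    exact ⟨⟨hc, h1, h2⟩, hl⟩

lemma count_last0 (k : ℕ) (hk : 0 < k) (A : Finset (Fin m)) :
    (univ.filter fun X : Finset (Fin (m + 1)) =>
      (X.card = 2 * k ∧ Odd (X ∩ A.map (e m)).card ∧ Odd (X \ A.map (e m)).card)
        ∧ Fin.last m ∈ X).card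
    = (univ.filter fun Y : Finset (Fin m) =>
        Y.card = 2 * k - 1 ∧ Odd (Y ∩ A).card).card := by
  apply card_nbij' (fun X => (X.erase (Fin.last m)).preimage (e m) ((e m).injective.injOn))
    (fun Y => insert (Fin.last m) (Y.map (e m)))
  · intro X hX
    simp only [mem_coe, mem_filter, mem_univ, true_and] at hX ⊢
    obtain ⟨⟨hcard, h1, h2⟩, hlast⟩ := hX
    have hE : Fin.last m ∉ X.erase (Fin.last m) := notMem_erase _ _
    have M := map_preimage_eq (X.erase (Fin.last m)) hE
    set P := (X.erase (Fin.last m)).preimage (e m) ((e m).injective.injOn) with hP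
    have c1 : P.card = X.card - 1 := by
      rw [← card_erase_of_mem hlast, ← M]; exact (card_map _).symm
    have eEA : X.erase (Fin.last m) ∩ A.map (e m) = X ∩ A.map (e m) := by
      ext x
      simp only [mem_inter, mem_erase]
      constructor
      · rintro ⟨⟨-, hx⟩, ha⟩; exact ⟨hx, ha⟩
      · rintro ⟨hx, ha⟩
        exact ⟨⟨fun h => last_not_mem_map A (h ▸ ha), hx⟩, ha⟩
    have c2 : (P ∩ A).card = (X ∩ A.map (e m)).card := by
      rw [← eEA, ← M, ← Finset.map_inter, card_map]
    simp only [Nat.odd_iff] at h1 ⊢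
    omega
  · intro Y hY
    simp only [mem_coe, mem_filter, mem_univ, true_and] at hY ⊢
    obtain ⟨hcard, h1⟩ := hY
    have hnm := last_not_mem_map Y
    have hnA := last_not_mem_map A
    have c1 : (insert (Fin.last m) (Y.map (e m))).card = Y.card + 1 := by
      rw [card_insert_of_notMem hnm, card_map]
    have e1 : insert (Fin.last m) (Y.map (e m)) ∩ A.map (e m)
        = Y.map (e m) ∩ A.map (e m) := insert_inter_of_notMem hnA
    have e2 : insert (Fin.last m) (Y.map (e m)) \ A.map (e m)
        = insert (Fin.last m) (Y.map (e m) \ A.map (e m)) :=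
      insert_sdiff_of_notMem _ hnA
    have c2 := card_inter_map Y A
    have c3 := card_sdiff_add_card_inter (Y.map (e m)) (A.map (e m))
    have c4 : (insert (Fin.last m) (Y.map (e m) \ A.map (e m))).card
        = (Y.map (e m) \ A.map (e m)).card + 1 :=
      card_insert_of_notMem (fun h => hnm (mem_sdiff.mp h).1)
    have c5 : (Y.map (e m)).card = Y.card := card_map _
    refine ⟨⟨by omega, ?_, ?_⟩, mem_insert_self _ _⟩
    · rw [e1]
      simp only [Nat.odd_iff] at h1 ⊢
      omega
    · rw [e2, c4]
      simp only [Nat.odd_iff] at h1 ⊢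
      omega
  · intro X hX
    simp only [mem_coe, mem_filter] at hX
    beta_reduce
    rw [map_preimage_eq _ (notMem_erase _ _), insert_erase hX.2.2]
  · intro Y hY
    simp only [mem_coe, mem_filter, mem_univ, true_and] at hY
    beta_reduce
    rw [erase_insert (last_not_mem_map Y), Finset.preimage_map]

end Stmt10

namespace Stmt10

lemma count_last1 (k : ℕ) (hk : 0 < k) (A : Finset (Fin m)) :
    (univ.filter fun X : Finset (Fin (m + 1)) =>
      (X.card = 2 * k ∧ Odd (X ∩ insert (Fin.last m) (A.map (e m))).card
        ∧ Odd (X \ insert (Fin.last m) (A.map (e m))).card) ∧ Fin.last m ∈ X).card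
    = (univ.filter fun Y : Finset (Fin m) =>
        Y.card = 2 * k - 1 ∧ ¬ Odd (Y ∩ A).card).card := by
  apply card_nbij' (fun X => (X.erase (Fin.last m)).preimage (e m) ((e m).injective.injOn))
    (fun Y => insert (Fin.last m) (Y.map (e m)))
  · intro X hX
    simp only [mem_coe, mem_filter, mem_univ, true_and] at hX ⊢
    obtain ⟨⟨hcard, h1, h2⟩, hlast⟩ := hX
    have hE : Fin.last m ∉ X.erase (Fin.last m) := notMem_erase _ _
    have M := map_preimage_eq (X.erase (Fin.last m)) hE
    set P := (X.erase (Fin.last m)).preimage (e m) ((e m).injective.injOn) with hP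
    have c1 : P.card = X.card - 1 := by
      rw [← card_erase_of_mem hlast, ← M]; exact (card_map _).symm
    have d1 : X ∩ insert (Fin.last m) (A.map (e m))
        = insert (Fin.last m) (X.erase (Fin.last m) ∩ A.map (e m)) := by
      conv_lhs => rw [← insert_erase hlast]
      rw [insert_inter_of_mem (mem_insert_self _ _), inter_insert_last _ A hE]
    have d2 : (X ∩ insert (Fin.last m) (A.map (e m))).card
        = (X.erase (Fin.last m) ∩ A.map (e m)).card + 1 := by
      rw [d1]
      exact card_insert_of_notMem (fun h => hE (mem_inter.mp h).1)
    have c2 : (P ∩ A).card = (X.erase (Fin.last m) ∩ A.map (e m)).card := by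
      rw [← M, ← Finset.map_inter, card_map]
    simp only [Nat.odd_iff] at h1 ⊢
    omega
  · intro Y hY
    simp only [mem_coe, mem_filter, mem_univ, true_and] at hY ⊢
    obtain ⟨hcard, h1⟩ := hY
    have hnm := last_not_mem_map Y
    have hmemA1 : Fin.last m ∈ insert (Fin.last m) (A.map (e m)) := mem_insert_self _ _
    have c1 : (insert (Fin.last m) (Y.map (e m))).card = Y.card + 1 := by
      rw [card_insert_of_notMem hnm, card_map]
    have e1 : insert (Fin.last m) (Y.map (e m)) ∩ insert (Fin.last m) (A.map (e m))
        = insert (Fin.last m) (Y.map (e m) ∩ A.map (e m)) := by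
      rw [insert_inter_of_mem hmemA1, inter_insert_last _ A hnm]
    have e2 : insert (Fin.last m) (Y.map (e m)) \ insert (Fin.last m) (A.map (e m))
        = Y.map (e m) \ A.map (e m) := by
      rw [insert_sdiff_of_mem _ hmemA1, sdiff_insert_last _ A hnm]
    have c2 := card_inter_map Y A
    have c3 := card_sdiff_add_card_inter (Y.map (e m)) (A.map (e m))
    have c4 : (insert (Fin.last m) (Y.map (e m) ∩ A.map (e m))).card
        = (Y.map (e m) ∩ A.map (e m)).card + 1 :=
      card_insert_of_notMem (fun h => hnm (mem_inter.mp h).1)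
    have c5 : (Y.map (e m)).card = Y.card := card_map _
    refine ⟨⟨by omega, ?_, ?_⟩, mem_insert_self _ _⟩
    · rw [e1, c4]
      simp only [Nat.odd_iff] at h1 ⊢
      omega
    · rw [e2]
      simp only [Nat.odd_iff] at h1 ⊢
      omega
  · intro X hX
    simp only [mem_coe, mem_filter] at hX
    beta_reduce
    rw [map_preimage_eq _ (notMem_erase _ _), insert_erase hX.2.2]
  · intro Y hY
    beta_reduce
    rw [erase_insert (last_not_mem_map Y), Finset.preimage_map]

end Stmt10

namespace Stmt10

lemma split_card {α : Type*} [Fintype α] [DecidableEq α] (p q : Finset α → Prop)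
    [DecidablePred p] [DecidablePred q] :
    (univ.filter p).card = (univ.filter fun X => p X ∧ q X).card
      + (univ.filter fun X => p X ∧ ¬ q X).card := by
  rw [← filter_filter, ← filter_filter,
    card_filter_add_card_filter_not]

lemma choose_count (r : ℕ) :
    (univ.filter fun Y : Finset (Fin m) => Y.card = r).card = m.choose r := by
  have h := Finset.card_powersetCard r (univ : Finset (Fin m))
  rw [powersetCard_eq_filter, powerset_univ] at h
  simpa using h

lemma key (k : ℕ) (hk : 0 < k) (A : Finset (Fin m)) :
    bpart k (m + 1) (A.map (e m)) + bpart k (m + 1) (insert (Fin.last m) (A.map (e m)))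
    = 2 * bpart k m A + m.choose (2 * k - 1) := by
  rw [bpart, bpart,
    split_card (fun X : Finset (Fin (m + 1)) =>
      X.card = 2 * k ∧ Odd (X ∩ A.map (e m)).card ∧ Odd (X \ A.map (e m)).card)
      (fun X => Fin.last m ∈ X),
    split_card (fun X : Finset (Fin (m + 1)) =>
      X.card = 2 * k ∧ Odd (X ∩ insert (Fin.last m) (A.map (e m))).card
        ∧ Odd (X \ insert (Fin.last m) (A.map (e m))).card)
      (fun X => Fin.last m ∈ X)]
  rw [count_last0 k hk A, count_last1 k hk A]
  rw [count_nolast k A]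
  have hcongr := nolast_congr (m := m) k A
  rw [hcongr, count_nolast k A]
  have hsplit := split_card (fun Y : Finset (Fin m) => Y.card = 2 * k - 1)
    (fun Y => Odd (Y ∩ A).card)
  have hch := choose_count (m := m) (2 * k - 1)
  omega

end Stmt10

open Stmt10 in
theorem stmt_10 (k n : ℕ) (hk : 0 < k) (hn : 0 < n) :
    (bmax k (n - 1) : ℝ) + (1 / 2) * ((n - 1).choose (2 * k - 1) : ℝ) ≤ bmax k n := by
  obtain ⟨m, rfl⟩ : ∃ m, n = m + 1 := ⟨n - 1, by omega⟩
  simp only [Nat.add_sub_cancel]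
  obtain ⟨A, -, hA⟩ := Finset.exists_mem_eq_sup (Finset.univ : Finset (Finset (Fin m)))
    ⟨∅, Finset.mem_univ _⟩ (bpart k m)
  have h1 : bpart k (m + 1) (A.map (e m)) ≤ bmax k (m + 1) :=
    Finset.le_sup (Finset.mem_univ _)
  have h2 : bpart k (m + 1) (insert (Fin.last m) (A.map (e m))) ≤ bmax k (m + 1) :=
    Finset.le_sup (Finset.mem_univ _)
  have hkey := key k hk A
  have hbm : bmax k m = bpart k m A := hA
  have hnat : 2 * bmax k m + m.choose (2 * k - 1) ≤ 2 * bmax k (m + 1) := by omega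
  have hcast : ((2 * bmax k m + m.choose (2 * k - 1) : ℕ) : ℝ)
      ≤ ((2 * bmax k (m + 1) : ℕ) : ℝ) := Nat.cast_le.mpr hnat
  push_cast at hcast
  linarith
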